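/- Suppose a graph G contains a funnel u with out-neighbor x. Let G' be obtained by deleting the vertices of N[u] ∩ N[x] and adding all edges between N(u) \ N[x] and N(x) \ N[u]. Then G has a vertex cover of size at most k if and only if G' has a vertex cover of size at most k − 1 − |N(u) ∩ N(x)|. -/

import Mathlib

open Finset

/-- `C` is a vertex cover of `G`. -/
def IsCover {V : Type*} (G : SimpleGraph V) (C : Finset V) : Prop :=
  ∀ u v, G.Adj u v → u ∈ C ∨ v ∈ C

/-- The graph produced by the funnel reduction (P3) on funnel `u` with out-neighbor `x`:
the vertices of `N[u] ∩ N[x]` are deleted (here left as isolated vertices), and all edges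
between `N(u) \ N[x]` and `N(x) \ N[u]` are added. -/
def funnelReduce {V : Type*} (G : SimpleGraph V) (u x : V) : SimpleGraph V where
  Adj a b := a ≠ b ∧
    ¬((a = u ∨ G.Adj u a) ∧ (a = x ∨ G.Adj x a)) ∧
    ¬((b = u ∨ G.Adj u b) ∧ (b = x ∨ G.Adj x b)) ∧
    (G.Adj a b ∨
      (G.Adj u a ∧ ¬(a = x ∨ G.Adj x a) ∧ G.Adj x b ∧ ¬(b = u ∨ G.Adj u b)) ∨
      (G.Adj x a ∧ ¬(a = u ∨ G.Adj u a) ∧ G.Adj u b ∧ ¬(b = x ∨ G.Adj x b)))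
  symm := by
    constructor
    rintro a b ⟨h1, h2, h3, h4⟩
    refine ⟨h1.symm, h3, h2, ?_⟩
    rcases h4 with h | h | h
    · exact Or.inl h.symm
    · exact Or.inr (Or.inr ⟨h.2.2.1, h.2.2.2, h.1, h.2.1⟩)
    · exact Or.inr (Or.inl ⟨h.2.2.1, h.2.2.2, h.1, h.2.1⟩)
  loopless := by constructor; rintro a ⟨h1, _⟩; exact h1 rfl

/-- Correctness of the funnel reduction (P3): `G` has a vertex cover of size at most `k`
iff the reduced graph has a vertex cover of size at most `k − 1 − |N(u) ∩ N(x)|`. -/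
theorem funnelReduce_cover_iff {V : Type*} [Fintype V] [DecidableEq V]
    (G : SimpleGraph V) [DecidableRel G.Adj] (u x : V) (k : ℕ)
    (hux : G.Adj u x)
    (hclique : ∀ a ∈ (G.neighborFinset u).erase x, ∀ b ∈ (G.neighborFinset u).erase x,
      a ≠ b → G.Adj a b) :
    (∃ C : Finset V, IsCover G C ∧ C.card ≤ k) ↔
    (∃ C : Finset V, IsCover (funnelReduce G u x) C ∧
      C.card + 1 + (G.neighborFinset u ∩ G.neighborFinset x).card ≤ k) := by
  classical
  have hune : u ≠ x := G.ne_of_adj hux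
  have hxu : G.Adj x u := hux.symm
  set D := G.neighborFinset u ∩ G.neighborFinset x with hDdef
  set S : Finset V := insert u (insert x D) with hSdef
  have hmemD : ∀ a, a ∈ D ↔ G.Adj u a ∧ G.Adj x a := by
    intro a; simp [hDdef]
  have huD : u ∉ D := fun h => G.irrefl ((hmemD u).1 h).1
  have hxD : x ∉ D := fun h => G.irrefl ((hmemD x).1 h).2
  have hS : ∀ a, a ∈ S ↔ (a = u ∨ G.Adj u a) ∧ (a = x ∨ G.Adj x a) := by
    intro a
    simp only [hSdef, mem_insert]
    constructor
    · rintro (rfl | rfl | h)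
      · exact ⟨Or.inl rfl, Or.inr hxu⟩
      · exact ⟨Or.inr hux, Or.inl rfl⟩
      · exact ⟨Or.inr ((hmemD a).1 h).1, Or.inr ((hmemD a).1 h).2⟩
    · rintro ⟨(rfl | h1), (rfl | h2)⟩
      · exact Or.inl rfl
      · exact Or.inl rfl
      · exact Or.inr (Or.inl rfl)
      · exact Or.inr (Or.inr ((hmemD a).2 ⟨h1, h2⟩))
  have hScard : S.card = D.card + 2 := by
    rw [hSdef, card_insert_of_notMem (by simp [hune, huD]),
      card_insert_of_notMem hxD]
  have hcl : ∀ a b, G.Adj u a → a ≠ x → G.Adj u b → b ≠ x → a ≠ b → G.Adj a b := by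
    intro a b ha hax hb hbx hab
    exact hclique a (by simp [mem_erase, hax, ha]) b (by simp [mem_erase, hbx, hb]) hab
  have hTle : ∀ (C T : Finset V), T ⊆ S → T ⊆ C → (C \ S).card + T.card ≤ C.card := by
    intro C T hTS hTC
    calc (C \ S).card + T.card = ((C \ S) ∪ T).card :=
          (card_union_of_disjoint (sdiff_disjoint.mono_right hTS)).symm
      _ ≤ C.card := card_le_card (union_subset sdiff_subset hTC)
  have hSsubC : ∀ (C : Finset V), u ∈ C → x ∈ C → D ⊆ C → S ⊆ C := by
    intro C hu hx hD
    rw [hSdef]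
    exact insert_subset_iff.2 ⟨hu, insert_subset_iff.2 ⟨hx, hD⟩⟩
  constructor
  · rintro ⟨C, hC, hCk⟩
    by_cases hxC : x ∈ C
    · by_cases hA : ∀ a, G.Adj u a → a ≠ x → ¬G.Adj x a → a ∈ C
      · refine ⟨C \ S, ?_, ?_⟩
        · rintro a b ⟨hab, ha, hb, hor⟩
          have ha' : a ∉ S := fun h => ha ((hS a).1 h)
          have hb' : b ∉ S := fun h => hb ((hS b).1 h)
          rcases hor with h | h | h
          · rcases hC a b h with h' | h'
            · exact Or.inl (mem_sdiff.2 ⟨h', ha'⟩)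
            · exact Or.inr (mem_sdiff.2 ⟨h', hb'⟩)
          · have : a ∈ C :=
              hA a h.1 (fun e => h.2.1 (Or.inl e)) (fun e => h.2.1 (Or.inr e))
            exact Or.inl (mem_sdiff.2 ⟨this, ha'⟩)
          · have : b ∈ C :=
              hA b h.2.2.1 (fun e => h.2.2.2 (Or.inl e)) (fun e => h.2.2.2 (Or.inr e))
            exact Or.inr (mem_sdiff.2 ⟨this, hb'⟩)
        · by_cases huC : u ∈ C
          · by_cases hDC : D ⊆ C
            · have h1 := hTle C S le_rfl (hSsubC C huC hxC hDC)
              omega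
            · obtain ⟨d₀, hd₀D, hd₀C⟩ := not_subset.1 hDC
              have hd₀u : G.Adj u d₀ := ((hmemD d₀).1 hd₀D).1
              have hd₀x : d₀ ≠ x := fun e => G.irrefl (e ▸ ((hmemD d₀).1 hd₀D).2)
              have hDe : D.erase d₀ ⊆ C := by
                intro d hd
                obtain ⟨hdd₀, hdD⟩ := mem_erase.1 hd
                have hdu : G.Adj u d := ((hmemD d).1 hdD).1
                have hdx : d ≠ x := fun e => G.irrefl (e ▸ ((hmemD d).1 hdD).2)
                exact (hC d d₀ (hcl d d₀ hdu hdx hd₀u hd₀x hdd₀)).resolve_right hd₀C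
              have hTS : insert u (insert x (D.erase d₀)) ⊆ S := by
                rw [hSdef]
                exact insert_subset_insert _ (insert_subset_insert _ (erase_subset _ _))
              have hTC : insert u (insert x (D.erase d₀)) ⊆ C :=
                insert_subset_iff.2 ⟨huC, insert_subset_iff.2 ⟨hxC, hDe⟩⟩
              have h1 := hTle C _ hTS hTC
              have hcard : (insert u (insert x (D.erase d₀))).card = (D.card - 1) + 2 := by
                rw [card_insert_of_notMem (by
                    simp only [mem_insert, mem_erase]
                    push_neg
                    exact ⟨hune, fun _ => huD⟩),
                  card_insert_of_notMem (fun h => hxD (mem_of_mem_erase h)),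
                  card_erase_of_mem hd₀D]
              have hpos : 1 ≤ D.card := card_pos.2 ⟨d₀, hd₀D⟩
              omega
          · have hDC : D ⊆ C := fun d hd =>
              (hC u d ((hmemD d).1 hd).1).resolve_left huC
            have hTS : insert x D ⊆ S := by
              rw [hSdef]; exact subset_insert _ _
            have hTC : insert x D ⊆ C := insert_subset_iff.2 ⟨hxC, hDC⟩
            have h1 := hTle C _ hTS hTC
            have hcard : (insert x D).card = D.card + 1 := card_insert_of_notMem hxD
            omega
      · push_neg at hA
        obtain ⟨a₀, ha₀u, ha₀x, ha₀nx, ha₀C⟩ := hA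
        have huC : u ∈ C := (hC u a₀ ha₀u).resolve_right ha₀C
        have hDC : D ⊆ C := by
          intro d hd
          have hdu : G.Adj u d := ((hmemD d).1 hd).1
          have hdx : d ≠ x := fun e => G.irrefl (e ▸ ((hmemD d).1 hd).2)
          have hne : a₀ ≠ d := fun e => ha₀nx (e ▸ ((hmemD d).1 hd).2)
          exact (hC a₀ d (hcl a₀ d ha₀u ha₀x hdu hdx hne)).resolve_left ha₀C
        refine ⟨insert a₀ (C \ S), ?_, ?_⟩
        · rintro a b ⟨hab, ha, hb, hor⟩
          have ha' : a ∉ S := fun h => ha ((hS a).1 h)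
          have hb' : b ∉ S := fun h => hb ((hS b).1 h)
          rcases hor with h | h | h
          · rcases hC a b h with h' | h'
            · exact Or.inl (mem_insert_of_mem (mem_sdiff.2 ⟨h', ha'⟩))
            · exact Or.inr (mem_insert_of_mem (mem_sdiff.2 ⟨h', hb'⟩))
          · by_cases haC : a ∈ C
            · exact Or.inl (mem_insert_of_mem (mem_sdiff.2 ⟨haC, ha'⟩))
            · have hax : a ≠ x := fun e => h.2.1 (Or.inl e)
              have : a = a₀ := by
                by_contra hne
                rcases hC a a₀ (hcl a a₀ h.1 hax ha₀u ha₀x hne) with h' | h'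
                · exact haC h'
                · exact ha₀C h'
              exact Or.inl (mem_insert.2 (Or.inl this))
          · by_cases hbC : b ∈ C
            · exact Or.inr (mem_insert_of_mem (mem_sdiff.2 ⟨hbC, hb'⟩))
            · have hbx : b ≠ x := fun e => h.2.2.2 (Or.inl e)
              have : b = a₀ := by
                by_contra hne
                rcases hC b a₀ (hcl b a₀ h.2.2.1 hbx ha₀u ha₀x hne) with h' | h'
                · exact hbC h'
                · exact ha₀C h'
              exact Or.inr (mem_insert.2 (Or.inl this))
        · have h1 := hTle C S le_rfl (hSsubC C huC hxC hDC)
          have h2 : (insert a₀ (C \ S)).card ≤ (C \ S).card + 1 := card_insert_le _ _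
          omega
    · have huC : u ∈ C := (hC u x hux).resolve_right hxC
      have hDC : D ⊆ C := fun d hd =>
        (hC x d ((hmemD d).1 hd).2).resolve_left hxC
      have hB : ∀ b, G.Adj x b → b ∈ C := fun b h => (hC x b h).resolve_left hxC
      refine ⟨C \ S, ?_, ?_⟩
      · rintro a b ⟨hab, ha, hb, hor⟩
        have ha' : a ∉ S := fun h => ha ((hS a).1 h)
        have hb' : b ∉ S := fun h => hb ((hS b).1 h)
        rcases hor with h | h | h
        · rcases hC a b h with h' | h'
          · exact Or.inl (mem_sdiff.2 ⟨h', ha'⟩)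
          · exact Or.inr (mem_sdiff.2 ⟨h', hb'⟩)
        · exact Or.inr (mem_sdiff.2 ⟨hB b h.2.2.1, hb'⟩)
        · exact Or.inl (mem_sdiff.2 ⟨hB a h.1, ha'⟩)
      · have hTS : insert u D ⊆ S := by
          rw [hSdef]
          exact insert_subset_insert _ (subset_insert _ _)
        have hTC : insert u D ⊆ C := insert_subset_iff.2 ⟨huC, hDC⟩
        have h1 := hTle C _ hTS hTC
        have hcard : (insert u D).card = D.card + 1 := card_insert_of_notMem huD
        omega
  · rintro ⟨C', hC', hCk⟩
    set C₀ := C' \ S with hC₀def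
    have hC₀sub : ∀ a, a ∈ C₀ → a ∈ C' := fun a h => (mem_sdiff.1 h).1
    have hC₀card : C₀.card ≤ C'.card := card_le_card sdiff_subset
    have hnotS_adj : ∀ p q, p ∉ S → q ∉ S → G.Adj p q → p ∈ C₀ ∨ q ∈ C₀ := by
      intro p q hp hq hpq
      have hadj : (funnelReduce G u x).Adj p q :=
        ⟨G.ne_of_adj hpq, fun h => hp ((hS p).2 h), fun h => hq ((hS q).2 h), Or.inl hpq⟩
      rcases hC' p q hadj with h | h
      · exact Or.inl (mem_sdiff.2 ⟨h, hp⟩)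
      · exact Or.inr (mem_sdiff.2 ⟨h, hq⟩)
    have hABcase : (∀ a, G.Adj u a → a ≠ x → ¬G.Adj x a → a ∈ C₀) ∨
        (∀ b, G.Adj x b → b ≠ u → ¬G.Adj u b → b ∈ C₀) := by
      by_contra h
      push_neg at h
      obtain ⟨⟨a₀, ha1, ha2, ha3, ha4⟩, ⟨b₀, hb1, hb2, hb3, hb4⟩⟩ := h
      have hnota : ¬(a₀ = x ∨ G.Adj x a₀) := by rintro (rfl | h) <;> [exact ha2 rfl; exact ha3 h]
      have hnotb : ¬(b₀ = u ∨ G.Adj u b₀) := by rintro (rfl | h) <;> [exact hb2 rfl; exact hb3 h]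
      have hadj : (funnelReduce G u x).Adj a₀ b₀ := by
        refine ⟨?_, ?_, ?_, Or.inr (Or.inl ⟨ha1, hnota, hb1, hnotb⟩)⟩
        · rintro rfl; exact hb3 ha1
        · rintro ⟨_, h2⟩; exact hnota h2
        · rintro ⟨h1, _⟩; exact hnotb h1
      rcases hC' a₀ b₀ hadj with h' | h'
      · exact ha4 (mem_sdiff.2 ⟨h', fun hs => hnota ((hS a₀).1 hs).2⟩)
      · exact hb4 (mem_sdiff.2 ⟨h', fun hs => hnotb ((hS b₀).1 hs).1⟩)
    rcases hABcase with hA | hB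
    · refine ⟨insert x (C₀ ∪ D), ?_, ?_⟩
      · have hend : ∀ p q, G.Adj p q → p ∈ S →
            p ∈ insert x (C₀ ∪ D) ∨ q ∈ insert x (C₀ ∪ D) := by
          intro p q hpq hp
          obtain ⟨h1, h2⟩ := (hS p).1 hp
          rcases h2 with rfl | h2
          · exact Or.inl (mem_insert_self _ _)
          rcases h1 with rfl | h1
          · by_cases hqx : q = x
            · exact Or.inr (hqx ▸ mem_insert_self _ _)
            by_cases hq2 : G.Adj x q
            · exact Or.inr (mem_insert_of_mem (mem_union_right _ ((hmemD q).2 ⟨hpq, hq2⟩)))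
            · exact Or.inr (mem_insert_of_mem (mem_union_left _ (hA q hpq hqx hq2)))
          · exact Or.inl (mem_insert_of_mem (mem_union_right _ ((hmemD p).2 ⟨h1, h2⟩)))
        intro p q hpq
        by_cases hp : p ∈ S
        · exact hend p q hpq hp
        by_cases hq : q ∈ S
        · exact (hend q p hpq.symm hq).symm
        · rcases hnotS_adj p q hp hq hpq with h | h
          · exact Or.inl (mem_insert_of_mem (mem_union_left _ h))
          · exact Or.inr (mem_insert_of_mem (mem_union_left _ h))
      · have h1 : (insert x (C₀ ∪ D)).card ≤ (C₀ ∪ D).card + 1 := card_insert_le _ _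
        have h2 : (C₀ ∪ D).card ≤ C₀.card + D.card := card_union_le _ _
        omega
    · refine ⟨insert u (C₀ ∪ D), ?_, ?_⟩
      · have hend : ∀ p q, G.Adj p q → p ∈ S →
            p ∈ insert u (C₀ ∪ D) ∨ q ∈ insert u (C₀ ∪ D) := by
          intro p q hpq hp
          obtain ⟨h1, h2⟩ := (hS p).1 hp
          rcases h1 with rfl | h1
          · exact Or.inl (mem_insert_self _ _)
          rcases h2 with rfl | h2
          · by_cases hqu : q = u
            · exact Or.inr (hqu ▸ mem_insert_self _ _)
            by_cases hq2 : G.Adj u q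
            · exact Or.inr (mem_insert_of_mem (mem_union_right _ ((hmemD q).2 ⟨hq2, hpq⟩)))
            · exact Or.inr (mem_insert_of_mem (mem_union_left _ (hB q hpq hqu hq2)))
          · exact Or.inl (mem_insert_of_mem (mem_union_right _ ((hmemD p).2 ⟨h1, h2⟩)))
        intro p q hpq
        by_cases hp : p ∈ S
        · exact hend p q hpq hp
        by_cases hq : q ∈ S
        · exact (hend q p hpq.symm hq).symm
        · rcases hnotS_adj p q hp hq hpq with h | h
          · exact Or.inl (mem_insert_of_mem (mem_union_left _ h))
          · exact Or.inr (mem_insert_of_mem (mem_union_left _ h))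
      · have h1 : (insert u (C₀ ∪ D)).card ≤ (C₀ ∪ D).card + 1 := card_insert_le _ _
        have h2 : (C₀ ∪ D).card ≤ C₀.card + D.card := card_union_le _ _
        omega
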